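/- The k-means problem formulated over binary assignment matrices is equivalent to its convex relaxation: the minimum of G over the relaxed set Ā is attained, there exists a minimizer Γ* of G over Ā which lies in the binary set A, and min_{Γ∈Ā} G(Γ) = min_{Γ∈A} G(Γ). -/

import Mathlib

open Finset

noncomputable section

/-- The set of binary assignment matrices: entries in `{0,1}`, row sums equal to `1`,
column sums at least `1`. -/
def kmeansA (n k : ℕ) : Set (Matrix (Fin n) (Fin k) ℝ) :=
  {Γ | (∀ i j, Γ i j = 0 ∨ Γ i j = 1) ∧ (∀ i, ∑ j, Γ i j = 1) ∧ (∀ j, 1 ≤ ∑ i, Γ i j)}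

/-- The convex relaxation: entries in `[0,1]`, row sums equal to `1`, column sums at least `1`. -/
def kmeansAbar (n k : ℕ) : Set (Matrix (Fin n) (Fin k) ℝ) :=
  {Γ | (∀ i j, 0 ≤ Γ i j ∧ Γ i j ≤ 1) ∧ (∀ i, ∑ j, Γ i j = 1) ∧ (∀ j, 1 ≤ ∑ i, Γ i j)}

/-- The concave assignment objective
`G(Γ) = c₀ − Σⱼ ‖Σᵢ Γᵢⱼ xᵢ‖² / (Σᵢ Γᵢⱼ)` with `c₀ = Σᵢ ‖xᵢ‖²`. -/
def kmeansG {n k d : ℕ} (x : Fin n → EuclideanSpace ℝ (Fin d))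
    (Γ : Matrix (Fin n) (Fin k) ℝ) : ℝ :=
  (∑ i, ‖x i‖ ^ 2) - ∑ j, ‖∑ i, Γ i j • x i‖ ^ 2 / (∑ i, Γ i j)

section KmeansAux

variable {n k d : ℕ}

lemma exists_direction (F : Finset (Fin n × Fin k)) (R' : Finset (Fin n)) (T' : Finset (Fin k))
    (hcard : R'.card + T'.card < F.card) :
    ∃ D : Matrix (Fin n) (Fin k) ℝ, D ≠ 0 ∧ (∀ p : Fin n × Fin k, p ∉ F → D p.1 p.2 = 0) ∧
      (∀ i ∈ R', ∑ j, D i j = 0) ∧ (∀ j ∈ T', ∑ i, D i j = 0) := by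
  classical
  set Φ : (↥F → ℝ) →ₗ[ℝ] (↥R' → ℝ) × (↥T' → ℝ) :=
    { toFun := fun v => (fun r => ∑ p : ↥F, if (p : Fin n × Fin k).1 = (r : Fin n) then v p else 0,
                         fun t => ∑ p : ↥F, if (p : Fin n × Fin k).2 = (t : Fin k) then v p else 0)
      map_add' := by
        intro u v
        refine Prod.ext ?_ ?_ <;> funext r <;>
          simp only [Prod.fst_add, Prod.snd_add, Pi.add_apply, ← Finset.sum_add_distrib] <;>
          refine Finset.sum_congr rfl fun p _ => ?_ <;> split <;> simp
      map_smul' := by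
        intro a v
        refine Prod.ext ?_ ?_ <;> funext r <;>
          simp only [Prod.smul_fst, Prod.smul_snd, Pi.smul_apply, smul_eq_mul, RingHom.id_apply,
            Finset.mul_sum] <;>
          refine Finset.sum_congr rfl fun p _ => ?_ <;> split <;> simp }
  have hni : ¬ Function.Injective Φ := by
    intro h
    have := LinearMap.finrank_le_finrank_of_injective h
    rw [Module.finrank_prod, Module.finrank_pi, Module.finrank_pi, Module.finrank_pi] at this
    simp only [Fintype.card_coe] at this
    omega
  obtain ⟨a, b, hab, hne⟩ := Function.not_injective_iff.mp hni
  set v : ↥F → ℝ := a - b with hv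
  have hΦv : Φ v = 0 := by rw [hv, map_sub, hab, sub_self]
  have hvne : v ≠ 0 := sub_ne_zero.mpr hne
  set g : Fin n × Fin k → ℝ := fun q => if h : q ∈ F then v ⟨q, h⟩ else 0 with hg
  refine ⟨fun i j => g (i, j), ?_, ?_, ?_, ?_⟩
  · intro h0
    apply hvne
    funext p
    have : g p = 0 := by
      have := congrFun (congrFun h0 (p : Fin n × Fin k).1) (p : Fin n × Fin k).2
      simpa using this
    simpa [hg, dif_pos p.2] using this
  · intro p hp; simp [hg, dif_neg hp]
  · intro i hi
    have h1 : Φ v = 0 := hΦv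
    have h2 : (∑ p : ↥F, if (p : Fin n × Fin k).1 = i then v p else 0) = 0 := by
      have := congrFun (congrArg Prod.fst h1) ⟨i, hi⟩
      exact this
    calc ∑ j, g (i, j)
        = ∑ q ∈ Finset.univ ×ˢ Finset.univ, if q.1 = i then g q else 0 := by
          rw [Finset.sum_product]
          rw [Finset.sum_eq_single i]
          · exact Finset.sum_congr rfl fun j _ => by simp
          · intro a _ ha; exact Finset.sum_eq_zero fun j _ => by simp [ha]
          · simp
      _ = ∑ q ∈ F, if q.1 = i then g q else 0 := by
          refine (Finset.sum_subset (Finset.subset_univ F |>.trans (by simp [Finset.univ_product_univ])) ?_).symm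
          intro q _ hq; simp [hg, dif_neg hq]
      _ = ∑ p : ↥F, if (p : Fin n × Fin k).1 = i then v p else 0 := by
          rw [← Finset.sum_coe_sort F]
          exact Finset.sum_congr rfl fun p _ => by simp [hg, dif_pos p.2]
      _ = 0 := h2
  · intro j hj
    have h2 : (∑ p : ↥F, if (p : Fin n × Fin k).2 = j then v p else 0) = 0 := by
      have := congrFun (congrArg Prod.snd hΦv) ⟨j, hj⟩
      exact this
    calc ∑ i, g (i, j)
        = ∑ q ∈ Finset.univ ×ˢ Finset.univ, if q.2 = j then g q else 0 := by
          rw [Finset.sum_product_right]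
          rw [Finset.sum_eq_single j]
          · exact Finset.sum_congr rfl fun i _ => by simp
          · intro a _ ha; exact Finset.sum_eq_zero fun i _ => by simp [ha]
          · simp
      _ = ∑ q ∈ F, if q.2 = j then g q else 0 := by
          refine (Finset.sum_subset (Finset.subset_univ F |>.trans (by simp [Finset.univ_product_univ])) ?_).symm
          intro q _ hq; simp [hg, dif_neg hq]
      _ = ∑ p : ↥F, if (p : Fin n × Fin k).2 = j then v p else 0 := by
          rw [← Finset.sum_coe_sort F]
          exact Finset.sum_congr rfl fun p _ => by simp [hg, dif_pos p.2]
      _ = 0 := h2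

noncomputable def FracSet (Γ : Matrix (Fin n) (Fin k) ℝ) : Finset (Fin n × Fin k) :=
  Finset.univ.filter fun p => ¬(Γ p.1 p.2 = 0 ∨ Γ p.1 p.2 = 1)

lemma mem_FracSet {Γ : Matrix (Fin n) (Fin k) ℝ} {p : Fin n × Fin k} :
    p ∈ FracSet Γ ↔ ¬(Γ p.1 p.2 = 0 ∨ Γ p.1 p.2 = 1) := by
  simp [FracSet]

-- a sum of 0/1 terms is a natural number
lemma sum_binary_int {α : Type*} (s : Finset α) (f : α → ℝ)
    (hf : ∀ a ∈ s, f a = 0 ∨ f a = 1) : ∃ m : ℕ, ∑ a ∈ s, f a = m := by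
  classical
  induction s using Finset.induction with
  | empty => exact ⟨0, by simp⟩
  | @insert a s' ha ih =>
    obtain ⟨m, hm⟩ := ih fun b hb => hf b (Finset.mem_insert_of_mem hb)
    rcases hf a (Finset.mem_insert_self a s') with h | h
    · exact ⟨m, by rw [Finset.sum_insert ha, h, hm, zero_add]⟩
    · exact ⟨m + 1, by rw [Finset.sum_insert ha, h, hm]; push_cast; ring⟩

-- in a line (row or column) summing to 1, a fractional entry implies a second fractional entry
lemma two_frac {α : Type*} [Fintype α] [DecidableEq α] (f : α → ℝ) (hnn : ∀ a, 0 ≤ f a)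
    (hsum : ∑ a, f a = 1) (a₀ : α) (h₀ : ¬(f a₀ = 0 ∨ f a₀ = 1)) :
    ∃ a₁, a₁ ≠ a₀ ∧ ¬(f a₁ = 0 ∨ f a₁ = 1) := by
  by_contra hcon
  push_neg at hcon
  have hbin : ∀ a ∈ Finset.univ.erase a₀, f a = 0 ∨ f a = 1 := fun a ha =>
    hcon a (Finset.mem_erase.mp ha).1
  obtain ⟨m, hm⟩ := sum_binary_int _ f hbin
  have key : f a₀ + (m : ℝ) = 1 := by
    rw [← hm]
    rw [← Finset.add_sum_erase _ f (Finset.mem_univ a₀)] at hsum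
    exact hsum
  rcases Nat.eq_zero_or_pos m with h | h
  · subst h; push_cast at key; exact h₀ (Or.inr (by linarith))
  · have : (1 : ℝ) ≤ m := by exact_mod_cast h
    have := hnn a₀
    exact h₀ (Or.inl (by linarith))

lemma exists_good_direction (Γ : Matrix (Fin n) (Fin k) ℝ) (hΓ : Γ ∈ kmeansAbar n k)
    (hne : (FracSet Γ).Nonempty) :
    ∃ D : Matrix (Fin n) (Fin k) ℝ, D ≠ 0 ∧ (∀ p : Fin n × Fin k, p ∉ FracSet Γ → D p.1 p.2 = 0) ∧
      (∀ i, ∑ j, D i j = 0) ∧ (∀ j, (∑ i, D i j = 0) ∨ 1 < ∑ i, Γ i j) := by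
  classical
  obtain ⟨h01, hrow, hcol⟩ := hΓ
  set F := FracSet Γ with hF
  set Rows : Finset (Fin n) := F.image Prod.fst with hRows
  set ColsF : Finset (Fin k) := F.image Prod.snd with hColsF
  set T : Finset (Fin k) := ColsF.filter (fun j => ¬ 1 < ∑ i, Γ i j) with hT
  set S : Finset (Fin k) := ColsF.filter (fun j => 1 < ∑ i, Γ i j) with hS
  -- row fibers have size ≥ 2
  have hrow2 : ∀ i ∈ Rows, 2 ≤ (F.filter (fun p => p.1 = i)).card := by
    intro i hi
    obtain ⟨p, hpF, hpi⟩ := Finset.mem_image.mp hi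
    have hfrac : ¬(Γ i p.2 = 0 ∨ Γ i p.2 = 1) := by
      have := mem_FracSet.mp hpF; rwa [hpi] at this
    obtain ⟨j₁, hj₁ne, hj₁⟩ := two_frac (Γ i) (fun j => (h01 i j).1) (hrow i) p.2 hfrac
    refine Finset.one_lt_card.mpr ?_
    refine ⟨(i, p.2), Finset.mem_filter.mpr ⟨mem_FracSet.mpr hfrac, rfl⟩,
      (i, j₁), Finset.mem_filter.mpr ⟨mem_FracSet.mpr hj₁, rfl⟩, ?_⟩
    intro hc
    exact hj₁ne (congrArg Prod.snd hc).symm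
  -- tight column fibers have size ≥ 2
  have hcol2 : ∀ j ∈ T, 2 ≤ (F.filter (fun p => p.2 = j)).card := by
    intro j hj
    rw [hT, Finset.mem_filter] at hj
    obtain ⟨hjC, hjt⟩ := hj
    have hsum1 : ∑ i, Γ i j = 1 := le_antisymm (not_lt.mp hjt) (hcol j)
    obtain ⟨p, hpF, hpj⟩ := Finset.mem_image.mp hjC
    have hfrac : ¬(Γ p.1 j = 0 ∨ Γ p.1 j = 1) := by
      have := mem_FracSet.mp hpF; rwa [hpj] at this
    obtain ⟨i₁, hi₁ne, hi₁⟩ := two_frac (fun i => Γ i j) (fun i => (h01 i j).1) hsum1 p.1 hfrac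
    refine Finset.one_lt_card.mpr ?_
    refine ⟨(p.1, j), Finset.mem_filter.mpr ⟨mem_FracSet.mpr hfrac, rfl⟩,
      (i₁, j), Finset.mem_filter.mpr ⟨mem_FracSet.mpr hi₁, rfl⟩, ?_⟩
    intro hc
    exact hi₁ne (congrArg Prod.fst hc).symm
  -- slack column fibers (in ColsF) are nonempty
  have hcol1 : ∀ j ∈ ColsF, 1 ≤ (F.filter (fun p => p.2 = j)).card := by
    intro j hj
    obtain ⟨p, hpF, hpj⟩ := Finset.mem_image.mp hj
    rw [Nat.succ_le_iff, Finset.card_pos]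
    exact ⟨p, Finset.mem_filter.mpr ⟨hpF, hpj⟩⟩
  have hFrows : F.card = ∑ i ∈ Rows, (F.filter (fun p => p.1 = i)).card :=
    Finset.card_eq_sum_card_fiberwise (fun p hp => Finset.mem_image_of_mem _ hp)
  have hFcols : F.card = ∑ j ∈ ColsF, (F.filter (fun p => p.2 = j)).card :=
    Finset.card_eq_sum_card_fiberwise (fun p hp => Finset.mem_image_of_mem _ hp)
  have hRST : ColsF = T ∪ S := by
    rw [hT, hS, ← Finset.filter_or]
    refine (Finset.filter_true_of_mem fun j _ => ?_).symm
    exact Or.symm (em _)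
  have hTSdisj : Disjoint T S := by
    rw [hT, hS]
    exact Finset.disjoint_filter.mpr fun j _ h1 h2 => h1 h2
  have hFR : 2 * Rows.card ≤ F.card := by
    rw [hFrows]
    calc 2 * Rows.card = ∑ _i ∈ Rows, 2 := by rw [Finset.sum_const, smul_eq_mul, mul_comm]
    _ ≤ _ := Finset.sum_le_sum hrow2
  have hFC : 2 * T.card + S.card ≤ F.card := by
    rw [hFcols, hRST, Finset.sum_union hTSdisj]
    have h1 : 2 * T.card ≤ ∑ j ∈ T, (F.filter (fun p => p.2 = j)).card := by
      calc 2 * T.card = ∑ _j ∈ T, 2 := by rw [Finset.sum_const, smul_eq_mul, mul_comm]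
      _ ≤ _ := Finset.sum_le_sum hcol2
    have h2 : S.card ≤ ∑ j ∈ S, (F.filter (fun p => p.2 = j)).card := by
      calc S.card = ∑ _j ∈ S, 1 := by rw [Finset.sum_const, smul_eq_mul, mul_one]
      _ ≤ _ := Finset.sum_le_sum (fun j hj => hcol1 j (by rw [hRST]; exact Finset.mem_union_right _ hj))
    omega
  -- rows not in Rows have no F-entries
  have hnotRow : ∀ (D : Matrix (Fin n) (Fin k) ℝ), (∀ p : Fin n × Fin k, p ∉ F → D p.1 p.2 = 0) →
      ∀ i, i ∉ Rows → ∑ j, D i j = 0 := by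
    intro D hsupp i hi
    refine Finset.sum_eq_zero fun j _ => hsupp (i, j) fun hins => hi ?_
    exact Finset.mem_image.mpr ⟨(i, j), hins, rfl⟩
  have hnotCol : ∀ (D : Matrix (Fin n) (Fin k) ℝ), (∀ p : Fin n × Fin k, p ∉ F → D p.1 p.2 = 0) →
      ∀ j, j ∉ ColsF → ∑ i, D i j = 0 := by
    intro D hsupp j hj
    refine Finset.sum_eq_zero fun i _ => hsupp (i, j) fun hins => hj ?_
    exact Finset.mem_image.mpr ⟨(i, j), hins, rfl⟩
  rcases S.eq_empty_or_nonempty with hSe | hSne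
  · -- no slack fractional columns: drop one row constraint
    have hRne : Rows.Nonempty := by
      obtain ⟨p, hp⟩ := hne
      exact ⟨p.1, Finset.mem_image_of_mem _ hp⟩
    obtain ⟨r₀, hr₀⟩ := hRne
    have hc : (Rows.erase r₀).card + T.card < F.card := by
      rw [Finset.card_erase_of_mem hr₀]
      have h1 : 1 ≤ Rows.card := Finset.card_pos.mpr ⟨r₀, hr₀⟩
      rw [hSe] at hFC
      simp at hFC
      omega
    obtain ⟨D, hD0, hsupp, hrowD, hcolD⟩ := exists_direction F (Rows.erase r₀) T hc
    have hColsFT : ColsF = T := by rw [hRST, hSe, Finset.union_empty]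
    have hallcols : ∀ j, ∑ i, D i j = 0 := by
      intro j
      by_cases hj : j ∈ ColsF
      · exact hcolD j (hColsFT ▸ hj)
      · exact hnotCol D hsupp j hj
    have hr₀sum : ∑ j, D r₀ j = 0 := by
      have hdouble : ∑ i, ∑ j, D i j = ∑ j, ∑ i, D i j := Finset.sum_comm
      rw [Finset.sum_eq_zero (fun j _ => hallcols j)] at hdouble
      have : ∑ i, ∑ j, D i j = ∑ j, D r₀ j := by
        rw [← Finset.add_sum_erase _ _ (Finset.mem_univ r₀)]
        have : ∑ i ∈ Finset.univ.erase r₀, ∑ j, D i j = 0 := by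
          refine Finset.sum_eq_zero fun i hi => ?_
          by_cases hiR : i ∈ Rows
          · exact hrowD i (Finset.mem_erase.mpr ⟨(Finset.mem_erase.mp hi).1, hiR⟩)
          · exact hnotRow D hsupp i hiR
        rw [this, add_zero]
      linarith [hdouble, this]
    refine ⟨D, hD0, hsupp, ?_, fun j => Or.inl (hallcols j)⟩
    intro i
    by_cases hiR : i ∈ Rows
    · by_cases hir : i = r₀
      · exact hir ▸ hr₀sum
      · exact hrowD i (Finset.mem_erase.mpr ⟨hir, hiR⟩)
    · exact hnotRow D hsupp i hiR
  · -- some slack fractional column exists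
    have hc : Rows.card + T.card < F.card := by
      have h1 : 1 ≤ S.card := Finset.card_pos.mpr hSne
      omega
    obtain ⟨D, hD0, hsupp, hrowD, hcolD⟩ := exists_direction F Rows T hc
    refine ⟨D, hD0, hsupp, ?_, ?_⟩
    · intro i
      by_cases hiR : i ∈ Rows
      · exact hrowD i hiR
      · exact hnotRow D hsupp i hiR
    · intro j
      by_cases hslack : 1 < ∑ i, Γ i j
      · exact Or.inr hslack
      · left
        by_cases hj : j ∈ ColsF
        · exact hcolD j (Finset.mem_filter.mpr ⟨hj, hslack⟩)
        · exact hnotCol D hsupp j hj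

noncomputable def SlackSet (Γ : Matrix (Fin n) (Fin k) ℝ) : Finset (Fin k) :=
  Finset.univ.filter fun j => 1 < ∑ i, Γ i j

noncomputable def meas (Γ : Matrix (Fin n) (Fin k) ℝ) : ℕ :=
  (FracSet Γ).card * (k + 1) + (SlackSet Γ).card

def Lcost (c Γ : Matrix (Fin n) (Fin k) ℝ) : ℝ := ∑ i, ∑ j, Γ i j * c i j

lemma descent (c Γ : Matrix (Fin n) (Fin k) ℝ) (hΓ : Γ ∈ kmeansAbar n k)
    (hne : (FracSet Γ).Nonempty) :
    ∃ Γ' ∈ kmeansAbar n k, Lcost c Γ' ≤ Lcost c Γ ∧ meas Γ' < meas Γ := by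
  classical
  obtain ⟨h01, hrow, hcol⟩ := hΓ
  -- get a direction with L c D ≤ 0
  obtain ⟨D, hD0, hsupp, hrowD, hcolD, hLD⟩ :
      ∃ D : Matrix (Fin n) (Fin k) ℝ, D ≠ 0 ∧
        (∀ p : Fin n × Fin k, p ∉ FracSet Γ → D p.1 p.2 = 0) ∧
        (∀ i, ∑ j, D i j = 0) ∧ (∀ j, (∑ i, D i j = 0) ∨ 1 < ∑ i, Γ i j) ∧ Lcost c D ≤ 0 := by
    obtain ⟨D, hD0, hsupp, hrowD, hcolD⟩ := exists_good_direction Γ ⟨h01, hrow, hcol⟩ hne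
    rcases le_or_gt (Lcost c D) 0 with h | h
    · exact ⟨D, hD0, hsupp, hrowD, hcolD, h⟩
    · refine ⟨-D, neg_ne_zero.mpr hD0, fun p hp => by simp [hsupp p hp], fun i => ?_, fun j => ?_, ?_⟩
      · simp only [Matrix.neg_apply, Finset.sum_neg_distrib, hrowD i, neg_zero]
      · rcases hcolD j with h' | h'
        · exact Or.inl (by simp only [Matrix.neg_apply, Finset.sum_neg_distrib, h', neg_zero])
        · exact Or.inr h'
      · have : Lcost c (-D) = -Lcost c D := by
          simp [Lcost, Finset.sum_neg_distrib]
        rw [this]; linarith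
  -- support entries are fractional
  have hfrac : ∀ p : Fin n × Fin k, D p.1 p.2 ≠ 0 → 0 < Γ p.1 p.2 ∧ Γ p.1 p.2 < 1 := by
    intro p hp
    by_cases hpF : p ∈ FracSet Γ
    · have := mem_FracSet.mp hpF
      push_neg at this
      exact ⟨lt_of_le_of_ne (h01 p.1 p.2).1 (Ne.symm this.1), lt_of_le_of_ne (h01 p.1 p.2).2 this.2⟩
    · exact absurd (hsupp p hpF) hp
  -- the index set of binding constraints
  set idxE : Finset (Fin n × Fin k) := Finset.univ.filter (fun p => D p.1 p.2 ≠ 0) with hidxE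
  set idxC : Finset (Fin k) := Finset.univ.filter (fun j => ∑ i, D i j < 0) with hidxC
  set ι : Finset ((Fin n × Fin k) ⊕ Fin k) :=
    idxE.map ⟨Sum.inl, Sum.inl_injective⟩ ∪ idxC.map ⟨Sum.inr, Sum.inr_injective⟩ with hι
  set bnd : ((Fin n × Fin k) ⊕ Fin k) → ℝ := Sum.elim
    (fun p => if 0 < D p.1 p.2 then (1 - Γ p.1 p.2) / D p.1 p.2 else Γ p.1 p.2 / (-D p.1 p.2))
    (fun j => (∑ i, Γ i j - 1) / (-∑ i, D i j)) with hbnd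
  have hιne : ι.Nonempty := by
    have : ∃ p : Fin n × Fin k, D p.1 p.2 ≠ 0 := by
      by_contra hcon
      push_neg at hcon
      exact hD0 (by ext i j; exact hcon (i, j))
    obtain ⟨p, hp⟩ := this
    exact ⟨Sum.inl p, Finset.mem_union_left _ (Finset.mem_map_of_mem _ (Finset.mem_filter.mpr ⟨Finset.mem_univ _, hp⟩))⟩
  obtain ⟨e₀, he₀, hmin⟩ := Finset.exists_min_image ι bnd hιne
  set t := bnd e₀ with ht
  -- positivity of all bounds
  have hbndpos : ∀ e ∈ ι, 0 < bnd e := by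
    intro e he
    rcases e with p | j
    · have hp : D p.1 p.2 ≠ 0 := by
        have := Finset.mem_union.mp he
        rcases this with h | h
        · obtain ⟨q, hq, hqe⟩ := Finset.mem_map.mp h
          cases hqe
          exact (Finset.mem_filter.mp hq).2
        · obtain ⟨q, hq, hqe⟩ := Finset.mem_map.mp h
          exact absurd hqe (by simp)
      obtain ⟨hl, hu⟩ := hfrac p hp
      rcases lt_or_gt_of_ne hp with hneg | hpos
      · simp only [hbnd, Sum.elim_inl, if_neg (not_lt.mpr (le_of_lt hneg))]
        exact div_pos hl (by linarith)
      · simp only [hbnd, Sum.elim_inl, if_pos hpos]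
        exact div_pos (by linarith) hpos
    · have hj : ∑ i, D i j < 0 := by
        have := Finset.mem_union.mp he
        rcases this with h | h
        · obtain ⟨q, hq, hqe⟩ := Finset.mem_map.mp h
          exact absurd hqe (by simp)
        · obtain ⟨q, hq, hqe⟩ := Finset.mem_map.mp h
          cases hqe
          exact (Finset.mem_filter.mp hq).2
      have hslack : 1 < ∑ i, Γ i j := by
        rcases hcolD j with h | h
        · exact absurd h (ne_of_lt hj)
        · exact h
      exact div_pos (by linarith) (by linarith)
  have htpos : 0 < t := hbndpos e₀ he₀
  -- bound consequences for entries
  have hentry : ∀ i j, 0 ≤ Γ i j + t * D i j ∧ Γ i j + t * D i j ≤ 1 := by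
    intro i j
    rcases lt_trichotomy (D i j) 0 with hneg | hzero | hpos
    · have hmem : Sum.inl (i, j) ∈ ι :=
        Finset.mem_union_left _ (Finset.mem_map_of_mem _
          (Finset.mem_filter.mpr ⟨Finset.mem_univ _, ne_of_lt hneg⟩))
      have hb := hmin _ hmem
      simp only [hbnd, Sum.elim_inl, if_neg (not_lt.mpr (le_of_lt hneg))] at hb
      have h1 : t * (-D i j) ≤ Γ i j := by
        have h2 : 0 < -D i j := by linarith
        exact (le_div_iff₀ h2).mp hb
      constructor
      · nlinarith
      · have := (h01 i j).2
        nlinarith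
    · simp [hzero, h01 i j]
    · have hmem : Sum.inl (i, j) ∈ ι :=
        Finset.mem_union_left _ (Finset.mem_map_of_mem _
          (Finset.mem_filter.mpr ⟨Finset.mem_univ _, ne_of_gt hpos⟩))
      have hb := hmin _ hmem
      simp only [hbnd, Sum.elim_inl, if_pos hpos] at hb
      have h1 : t * D i j ≤ 1 - Γ i j := by
        rw [le_div_iff₀ hpos] at hb
        linarith
      constructor
      · have := (h01 i j).1
        nlinarith
      · linarith
  set Γ' : Matrix (Fin n) (Fin k) ℝ := fun i j => Γ i j + t * D i j with hΓ'
  have hrow' : ∀ i, ∑ j, Γ' i j = 1 := by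
    intro i
    simp only [hΓ', Finset.sum_add_distrib, ← Finset.mul_sum, hrowD i, mul_zero, add_zero]
    exact hrow i
  have hcolsum' : ∀ j, ∑ i, Γ' i j = ∑ i, Γ i j + t * ∑ i, D i j := by
    intro j
    simp [hΓ', Finset.sum_add_distrib, ← Finset.mul_sum]
  have hcol' : ∀ j, 1 ≤ ∑ i, Γ' i j := by
    intro j
    rw [hcolsum' j]
    rcases lt_trichotomy (∑ i, D i j) 0 with hneg | hzero | hpos
    · have hmem : Sum.inr j ∈ ι :=
        Finset.mem_union_right _ (Finset.mem_map_of_mem _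
          (Finset.mem_filter.mpr ⟨Finset.mem_univ _, hneg⟩))
      have hb := hmin _ hmem
      simp only [hbnd, Sum.elim_inr] at hb
      rw [le_div_iff₀ (by linarith)] at hb
      nlinarith
    · rw [hzero, mul_zero, add_zero]; exact hcol j
    · nlinarith [hcol j]
  have hAbar' : Γ' ∈ kmeansAbar n k := ⟨fun i j => hentry i j, hrow', hcol'⟩
  -- non-increase of fractional set and slack set
  have hFsub : FracSet Γ' ⊆ FracSet Γ := by
    intro p hp
    by_contra hpF
    have hD : D p.1 p.2 = 0 := hsupp p hpF
    have : Γ' p.1 p.2 = Γ p.1 p.2 := by simp [hΓ', hD]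
    have h2 : Γ p.1 p.2 = 0 ∨ Γ p.1 p.2 = 1 := not_not.mp fun hc => hpF (mem_FracSet.mpr hc)
    exact (mem_FracSet.mp hp) (by rw [this]; exact h2)
  have hSsub : SlackSet Γ' ⊆ SlackSet Γ := by
    intro j hj
    simp only [SlackSet, Finset.mem_filter, Finset.mem_univ, true_and] at hj ⊢
    by_contra hns
    have htight : ∑ i, Γ i j = 1 := le_antisymm (not_lt.mp hns) (hcol j)
    have hzero : ∑ i, D i j = 0 := by
      rcases hcolD j with h | h
      · exact h
      · rw [htight] at h; exact absurd h (lt_irrefl 1)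
    rw [hcolsum' j, htight, hzero, mul_zero, add_zero] at hj
    exact absurd hj (lt_irrefl 1)
  -- strict decrease
  have hstrict : meas Γ' < meas Γ := by
    have hcards : (FracSet Γ').card ≤ (FracSet Γ).card := Finset.card_le_card hFsub
    have hcardS : (SlackSet Γ').card ≤ (SlackSet Γ).card := Finset.card_le_card hSsub
    have hSbound : (SlackSet Γ').card ≤ k := by
      calc (SlackSet Γ').card ≤ Finset.univ.card := Finset.card_le_card (Finset.filter_subset _ _)
      _ = k := Finset.card_univ.trans (Fintype.card_fin k)
    rcases he₀mem : e₀ with p₀ | j₀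
    · -- an entry becomes integral
      have hp₀ : D p₀.1 p₀.2 ≠ 0 := by
        have := he₀
        rw [he₀mem] at this
        rcases Finset.mem_union.mp this with h | h
        · obtain ⟨q, hq, hqe⟩ := Finset.mem_map.mp h
          cases hqe
          exact (Finset.mem_filter.mp hq).2
        · obtain ⟨q, hq, hqe⟩ := Finset.mem_map.mp h
          exact absurd hqe (by simp)
      have hint : Γ' p₀.1 p₀.2 = 0 ∨ Γ' p₀.1 p₀.2 = 1 := by
        rcases lt_or_gt_of_ne hp₀ with hneg | hpos
        · left
          have : t = Γ p₀.1 p₀.2 / (-D p₀.1 p₀.2) := by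
            rw [ht, he₀mem]
            simp only [hbnd, Sum.elim_inl, if_neg (not_lt.mpr (le_of_lt hneg))]
          have hDne : D p₀.1 p₀.2 ≠ 0 := ne_of_lt hneg
          show Γ p₀.1 p₀.2 + t * D p₀.1 p₀.2 = 0
          rw [this, div_mul_eq_mul_div, mul_div_assoc, div_neg, div_self hDne]
          ring
        · right
          have : t = (1 - Γ p₀.1 p₀.2) / D p₀.1 p₀.2 := by
            rw [ht, he₀mem]
            simp only [hbnd, Sum.elim_inl, if_pos hpos]
          have hDne : D p₀.1 p₀.2 ≠ 0 := ne_of_gt hpos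
          show Γ p₀.1 p₀.2 + t * D p₀.1 p₀.2 = 1
          rw [this, div_mul_eq_mul_div, mul_div_assoc, div_self hDne]
          ring
      have hp₀F : p₀ ∈ FracSet Γ := mem_FracSet.mpr (by
        obtain ⟨h1, h2⟩ := hfrac p₀ hp₀
        push_neg
        exact ⟨ne_of_gt h1, ne_of_lt h2⟩)
      have hp₀notF' : p₀ ∉ FracSet Γ' := fun hc => (mem_FracSet.mp hc) hint
      have hlt : (FracSet Γ').card < (FracSet Γ).card :=
        Finset.card_lt_card (Finset.ssubset_iff_of_subset hFsub |>.mpr ⟨p₀, hp₀F, hp₀notF'⟩)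
      unfold meas
      have : (FracSet Γ').card + 1 ≤ (FracSet Γ).card := hlt
      nlinarith [hSbound, hcardS]
    · -- a slack column becomes tight
      have hj₀ : ∑ i, D i j₀ < 0 := by
        have := he₀
        rw [he₀mem] at this
        rcases Finset.mem_union.mp this with h | h
        · obtain ⟨q, hq, hqe⟩ := Finset.mem_map.mp h
          exact absurd hqe (by simp)
        · obtain ⟨q, hq, hqe⟩ := Finset.mem_map.mp h
          cases hqe
          exact (Finset.mem_filter.mp hq).2
      have hslack : 1 < ∑ i, Γ i j₀ := by
        rcases hcolD j₀ with h | h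
        · exact absurd h (ne_of_lt hj₀)
        · exact h
      have htval : t = (∑ i, Γ i j₀ - 1) / (-∑ i, D i j₀) := by
        rw [ht, he₀mem]; rfl
      have htight' : ∑ i, Γ' i j₀ = 1 := by
        have hDne : (∑ i, D i j₀) ≠ 0 := ne_of_lt hj₀
        have h2 : t * (∑ i, D i j₀) = -(∑ i, Γ i j₀ - 1) := by
          rw [htval, div_mul_eq_mul_div, mul_div_assoc, div_neg, div_self hDne]
          ring
        rw [hcolsum' j₀, h2]; ring
      have hj₀S : j₀ ∈ SlackSet Γ := by
        simp only [SlackSet, Finset.mem_filter, Finset.mem_univ, true_and]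
        exact hslack
      have hj₀notS' : j₀ ∉ SlackSet Γ' := by
        simp only [SlackSet, Finset.mem_filter, Finset.mem_univ, true_and, htight']
        exact lt_irrefl 1
      have hlt : (SlackSet Γ').card < (SlackSet Γ).card :=
        Finset.card_lt_card (Finset.ssubset_iff_of_subset hSsub |>.mpr ⟨j₀, hj₀S, hj₀notS'⟩)
      unfold meas
      nlinarith [hcards]
  -- cost non-increase
  have hLle : Lcost c Γ' ≤ Lcost c Γ := by
    have : Lcost c Γ' = Lcost c Γ + t * Lcost c D := by
      simp only [Lcost, hΓ']
      rw [Finset.mul_sum, ← Finset.sum_add_distrib]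
      refine Finset.sum_congr rfl fun i _ => ?_
      rw [Finset.mul_sum, ← Finset.sum_add_distrib]
      refine Finset.sum_congr rfl fun j _ => by ring
    rw [this]
    nlinarith
  exact ⟨Γ', hAbar', hLle, hstrict⟩

lemma rounding (c : Matrix (Fin n) (Fin k) ℝ) :
    ∀ N : ℕ, ∀ Γ ∈ kmeansAbar n k, meas Γ ≤ N → ∃ Γ' ∈ kmeansA n k, Lcost c Γ' ≤ Lcost c Γ := by
  intro N
  induction N with
  | zero =>
    intro Γ hΓ hm
    rcases (FracSet Γ).eq_empty_or_nonempty with he | hne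
    · refine ⟨Γ, ⟨?_, hΓ.2.1, hΓ.2.2⟩, le_refl _⟩
      intro i j
      by_contra hc
      push_neg at hc
      have : (i, j) ∈ FracSet Γ := by
        simp only [FracSet, Finset.mem_filter, Finset.mem_univ, true_and]
        push_neg
        exact hc
      rw [he] at this
      exact absurd this (Finset.notMem_empty _)
    · exfalso
      have : 1 ≤ (FracSet Γ).card := Finset.card_pos.mpr hne
      have : k + 1 ≤ meas Γ := by
        unfold meas
        nlinarith
      omega
  | succ N ih =>
    intro Γ hΓ hm
    rcases (FracSet Γ).eq_empty_or_nonempty with he | hne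
    · refine ⟨Γ, ⟨?_, hΓ.2.1, hΓ.2.2⟩, le_refl _⟩
      intro i j
      by_contra hc
      push_neg at hc
      have : (i, j) ∈ FracSet Γ := by
        simp only [FracSet, Finset.mem_filter, Finset.mem_univ, true_and]
        push_neg
        exact hc
      rw [he] at this
      exact absurd this (Finset.notMem_empty _)
    · obtain ⟨Γ'', hΓ'', hL, hmeas⟩ := descent c Γ hΓ hne
      obtain ⟨Γ', hΓ', hL'⟩ := ih Γ'' hΓ'' (by omega)
      exact ⟨Γ', hΓ', le_trans hL' hL⟩

-- geometry
lemma L_expand (x : Fin n → EuclideanSpace ℝ (Fin d)) (μ : Fin k → EuclideanSpace ℝ (Fin d))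
    (Γ : Matrix (Fin n) (Fin k) ℝ) (hrow : ∀ i, ∑ j, Γ i j = 1) :
    Lcost (fun i j => ‖x i - μ j‖ ^ 2) Γ =
      (∑ i, ‖x i‖ ^ 2) - ∑ j, (2 * (inner ℝ (∑ i, Γ i j • x i) (μ j) : ℝ)
        - (∑ i, Γ i j) * ‖μ j‖ ^ 2) := by
  have hterm : ∀ i j, Γ i j * ‖x i - μ j‖ ^ 2 =
      Γ i j * ‖x i‖ ^ 2 - (2 * (inner ℝ (Γ i j • x i) (μ j) : ℝ) - Γ i j * ‖μ j‖ ^ 2) := by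
    intro i j
    rw [norm_sub_sq_real, real_inner_smul_left]
    ring
  calc Lcost (fun i j => ‖x i - μ j‖ ^ 2) Γ
      = ∑ i, ∑ j, (Γ i j * ‖x i‖ ^ 2 - (2 * (inner ℝ (Γ i j • x i) (μ j) : ℝ)
          - Γ i j * ‖μ j‖ ^ 2)) := by
        exact Finset.sum_congr rfl fun i _ => Finset.sum_congr rfl fun j _ => hterm i j
    _ = ∑ i, (‖x i‖ ^ 2 - ∑ j, (2 * (inner ℝ (Γ i j • x i) (μ j) : ℝ) - Γ i j * ‖μ j‖ ^ 2)) := by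
        refine Finset.sum_congr rfl fun i _ => ?_
        rw [Finset.sum_sub_distrib, ← Finset.sum_mul, hrow i, one_mul]
    _ = (∑ i, ‖x i‖ ^ 2) - ∑ i, ∑ j, (2 * (inner ℝ (Γ i j • x i) (μ j) : ℝ) - Γ i j * ‖μ j‖ ^ 2) := by
        rw [Finset.sum_sub_distrib]
    _ = (∑ i, ‖x i‖ ^ 2) - ∑ j, (2 * (inner ℝ (∑ i, Γ i j • x i) (μ j) : ℝ)
          - (∑ i, Γ i j) * ‖μ j‖ ^ 2) := by
        congr 1
        rw [Finset.sum_comm]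
        refine Finset.sum_congr rfl fun j _ => ?_
        rw [Finset.sum_sub_distrib, sum_inner, Finset.mul_sum, Finset.sum_mul]

lemma G_le_L (x : Fin n → EuclideanSpace ℝ (Fin d)) (μ : Fin k → EuclideanSpace ℝ (Fin d))
    (Γ : Matrix (Fin n) (Fin k) ℝ) (hΓ : Γ ∈ kmeansAbar n k) :
    kmeansG x Γ ≤ Lcost (fun i j => ‖x i - μ j‖ ^ 2) Γ := by
  obtain ⟨h01, hrow, hcol⟩ := hΓ
  rw [L_expand x μ Γ hrow]
  unfold kmeansG
  have key : ∀ j, 2 * (inner ℝ (∑ i, Γ i j • x i) (μ j) : ℝ) - (∑ i, Γ i j) * ‖μ j‖ ^ 2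
      ≤ ‖∑ i, Γ i j • x i‖ ^ 2 / (∑ i, Γ i j) := by
    intro j
    have hm : (0:ℝ) < ∑ i, Γ i j := lt_of_lt_of_le one_pos (hcol j)
    rw [le_div_iff₀ hm]
    have habs : |∑ i, Γ i j| = ∑ i, Γ i j := abs_of_pos hm
    have h0 : (0:ℝ) ≤ ‖(∑ i, Γ i j • x i) - (∑ i, Γ i j) • μ j‖ ^ 2 := sq_nonneg _
    rw [norm_sub_sq_real, real_inner_smul_right, norm_smul, Real.norm_eq_abs, habs,
      mul_pow] at h0
    nlinarith [h0]
  have := Finset.sum_le_sum fun j (_ : j ∈ Finset.univ) => key j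
  linarith

lemma L_eq_G (x : Fin n → EuclideanSpace ℝ (Fin d)) (Γ : Matrix (Fin n) (Fin k) ℝ)
    (hΓ : Γ ∈ kmeansAbar n k) :
    Lcost (fun i j => ‖x i - (∑ i', Γ i' j)⁻¹ • (∑ i', Γ i' j • x i')‖ ^ 2) Γ = kmeansG x Γ := by
  obtain ⟨h01, hrow, hcol⟩ := hΓ
  set μ : Fin k → EuclideanSpace ℝ (Fin d) := fun j => (∑ i', Γ i' j)⁻¹ • (∑ i', Γ i' j • x i')
    with hμ
  rw [L_expand x μ Γ hrow]
  unfold kmeansG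
  congr 1
  refine Finset.sum_congr rfl fun j _ => ?_
  have hm : (0:ℝ) < ∑ i, Γ i j := lt_of_lt_of_le one_pos (hcol j)
  have hmne : (∑ i, Γ i j) ≠ 0 := ne_of_gt hm
  rw [hμ]
  rw [real_inner_smul_right, real_inner_self_eq_norm_sq, norm_smul]
  rw [Real.norm_eq_abs, abs_inv, abs_of_pos hm]
  field_simp
  ring

lemma A_subset_Abar : kmeansA n k ⊆ kmeansAbar n k := by
  rintro Γ ⟨h01, hrow, hcol⟩
  refine ⟨fun i j => ?_, hrow, hcol⟩
  rcases h01 i j with h | h <;> rw [h] <;> norm_num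

lemma A_finite : (kmeansA n k).Finite := by
  have hsub : kmeansA n k ⊆ Set.univ.pi (fun _ : Fin n => Set.univ.pi
      (fun _ : Fin k => ({0, 1} : Set ℝ))) := by
    rintro Γ ⟨h01, -, -⟩
    intro i _
    intro j _
    rcases h01 i j with h | h <;> simp [h]
  exact Set.Finite.subset (Set.Finite.pi fun i => Set.Finite.pi fun j =>
    (Set.finite_singleton (1:ℝ)).insert 0) hsub

lemma A_nonempty (hk : 1 ≤ k) (hkn : k ≤ n) : (kmeansA n k).Nonempty := by
  classical
  set f : Fin n → Fin k := fun i => if h : (i : ℕ) < k then ⟨i, h⟩ else ⟨0, hk⟩ with hf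
  refine ⟨fun i j => if j = f i then 1 else 0, fun i j => ?_, fun i => ?_, fun j => ?_⟩
  · dsimp only
    split <;> simp
  · simp [Finset.sum_ite_eq']
  · have hi : ∃ i : Fin n, f i = j := by
      refine ⟨⟨(j : ℕ), lt_of_lt_of_le j.2 hkn⟩, ?_⟩
      rw [hf]
      simp only [j.2, dif_pos]
    obtain ⟨i₀, hi₀⟩ := hi
    have heq : (fun i => if j = f i then (1:ℝ) else 0) i₀ = 1 := by
      dsimp only
      rw [hi₀]
      simp
    have hle := Finset.single_le_sum (f := fun i => if j = f i then (1:ℝ) else 0)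
      (fun i _ => by split <;> norm_num) (Finset.mem_univ i₀)
    rw [show (if j = f i₀ then (1:ℝ) else 0) = 1 from heq] at hle
    exact hle

end KmeansAux

/-- The k-means problem over binary assignment matrices is equivalent to its convex
relaxation: the minimum of `G` over `Ā` is attained, there is a minimizer lying in the
binary set `A`, and the minimum values over `Ā` and `A` coincide. -/
theorem kmeans_relaxation_equivalence (n k d : ℕ) (hk : 1 ≤ k) (hkn : k ≤ n)
    (x : Fin n → EuclideanSpace ℝ (Fin d)) :
    ∃ Γstar ∈ kmeansA n k,
      IsLeast (kmeansG x '' kmeansAbar n k) (kmeansG x Γstar) ∧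
      IsLeast (kmeansG x '' kmeansA n k) (kmeansG x Γstar) ∧
      sInf (kmeansG x '' kmeansAbar n k) = sInf (kmeansG x '' kmeansA n k) := by
  classical
  obtain ⟨Γs, hΓsA, hmin⟩ := Set.exists_min_image (kmeansA n k) (kmeansG x)
    A_finite (A_nonempty hk hkn)
  have key : ∀ Γ ∈ kmeansAbar n k, kmeansG x Γs ≤ kmeansG x Γ := by
    intro Γ hΓ
    set c : Matrix (Fin n) (Fin k) ℝ :=
      fun i j => ‖x i - (∑ i', Γ i' j)⁻¹ • (∑ i', Γ i' j • x i')‖ ^ 2 with hc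
    obtain ⟨Γ', hΓ'A, hL⟩ := rounding c (meas Γ) Γ hΓ (le_refl _)
    have h1 : kmeansG x Γ' ≤ Lcost c Γ' := G_le_L x _ Γ' (A_subset_Abar hΓ'A)
    have h2 : Lcost c Γ = kmeansG x Γ := L_eq_G x Γ hΓ
    calc kmeansG x Γs ≤ kmeansG x Γ' := hmin Γ' hΓ'A
    _ ≤ Lcost c Γ' := h1
    _ ≤ Lcost c Γ := hL
    _ = kmeansG x Γ := h2
  have hleast1 : IsLeast (kmeansG x '' kmeansAbar n k) (kmeansG x Γs) :=
    ⟨⟨Γs, A_subset_Abar hΓsA, rfl⟩, by rintro y ⟨Γ, hΓ, rfl⟩; exact key Γ hΓ⟩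
  have hleast2 : IsLeast (kmeansG x '' kmeansA n k) (kmeansG x Γs) :=
    ⟨⟨Γs, hΓsA, rfl⟩, by rintro y ⟨Γ, hΓ, rfl⟩; exact hmin Γ hΓ⟩
  exact ⟨Γs, hΓsA, hleast1, hleast2, (hleast1.csInf_eq).trans (hleast2.csInf_eq).symm⟩
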